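/- Let v ∈ ℝ^d, let w_1, …, w_d ∈ ℤ^d be linearly independent, and let ξ, ξ' ∈ ℝ^d satisfy ξ·w_i ≠ 0 ≠ ξ'·w_i for all i, with sign(ξ·w_i) = sign(ξ'·w_i) for all i ≠ j and sign(ξ·w_j) = −sign(ξ'·w_j) for one index j. Then the half-open cones K_{ξ,v} and K_{ξ',v} (where K_{η,v} := v + Σ_{η·w_i>0} ℝ_{≥0}w_i + Σ_{η·w_i<0} ℝ_{<0}w_i) are disjoint, and their union is the cone K := v + ℝw_j + Σ_{i≠j, ξ·w_i>0} ℝ_{≥0}w_i + Σ_{i≠j, ξ·w_i<0} ℝ_{<0}w_i, which satisfies w_j + K = K. Consequently S_{K_{ξ,v}} + S_{K_{ξ',v}} = S_K, and φ(S_{K_{ξ,v}}) = −φ(S_{K_{ξ',v}}) in ℂ(x_1,…,x_d). -/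

import Mathlib

open scoped BigOperators Classical

noncomputable section

/-- The real vector corresponding to an integer vector. -/
def toR (d : ℕ) (m : Fin d → ℤ) : Fin d → ℝ := fun i => (m i : ℝ)

/-- The standard dot product on `ℝ^d`. -/
def dotR (d : ℕ) (x y : Fin d → ℝ) : ℝ := ∑ i, x i * y i

/-- Laurent polynomials `ℂ[x₁^{±1},…,x_d^{±1}]`, represented by their coefficient functions. -/
abbrev LaurentPoly (d : ℕ) := (Fin d → ℤ) →₀ ℂ

/-- The integer-point generating series of a subset of `ℝ^d`: the function `ℤ^d → ℂ`
equal to `1` on `S ∩ ℤ^d` and `0` elsewhere. -/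
def genSeries (d : ℕ) (S : Set (Fin d → ℝ)) : (Fin d → ℤ) → ℂ :=
  fun m => if toR d m ∈ S then 1 else 0

/-- The action of a Laurent polynomial on a formal Laurent series,
`(x^w · S)(m) = S(m - w)` extended linearly. -/
def actLP (d : ℕ) (g : LaurentPoly d) (S : (Fin d → ℤ) → ℂ) : (Fin d → ℤ) → ℂ :=
  fun m => ∑ w ∈ g.support, g w * S (m - w)

/-- The series of a Laurent polynomial `f`, i.e. `Σ_m f_m x^m` as a formal series. -/
def seriesOf (d : ℕ) (f : LaurentPoly d) : (Fin d → ℤ) → ℂ := fun m => f m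

/-- The cone `v + ℝ_{≥0} w₁ + ⋯ + ℝ_{≥0} w_n`. -/
def coneSet (d n : ℕ) (v : Fin d → ℝ) (w : Fin n → Fin d → ℤ) : Set (Fin d → ℝ) :=
  {y | ∃ lam : Fin n → ℝ, (∀ i, 0 ≤ lam i) ∧ y = v + ∑ i, lam i • toR d (w i)}

/-- The fundamental half-open parallelepiped `{v + Σ λᵢ wᵢ : 0 ≤ λᵢ < 1}`. -/
def parSet (d : ℕ) (v : Fin d → ℝ) (w : Fin d → Fin d → ℤ) : Set (Fin d → ℝ) :=
  {y | ∃ lam : Fin d → ℝ, (∀ i, 0 ≤ lam i ∧ lam i < 1) ∧ y = v + ∑ i, lam i • toR d (w i)}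

/-- A simple rational cone: `v + ℝ_{≥0} w₁ + ⋯ + ℝ_{≥0} w_d` with `w₁,…,w_d ∈ ℤ^d`
linearly independent. -/
def IsSimpleCone (d : ℕ) (K : Set (Fin d → ℝ)) : Prop :=
  ∃ (v : Fin d → ℝ) (w : Fin d → Fin d → ℤ),
    LinearIndependent ℝ (fun i => toR d (w i)) ∧ K = coneSet d d v w

/-- Membership in the module `PL` of polyhedral Laurent series: a finite
`ℂ[x₁^{±1},…,x_d^{±1}]`-linear combination of the series of simple rational cones. -/
def MemPL (d : ℕ) (S : (Fin d → ℤ) → ℂ) : Prop :=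
  ∃ (n : ℕ) (g : Fin n → LaurentPoly d) (K : Fin n → Set (Fin d → ℝ)),
    (∀ i, IsSimpleCone d (K i)) ∧ S = ∑ i, actLP d (g i) (genSeries d (K i))

/-- The field of rational functions `ℂ(x₁,…,x_d)`. -/
abbrev RatF (d : ℕ) := FractionRing (MvPolynomial (Fin d) ℂ)

/-- The monomial `x^w`, `w ∈ ℤ^d`, as a rational function. -/
def ratMon (d : ℕ) (w : Fin d → ℤ) : RatF d :=
  ∏ i, (algebraMap (MvPolynomial (Fin d) ℂ) (RatF d) (MvPolynomial.X i)) ^ (w i)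

/-- A Laurent polynomial as a rational function. -/
def toRat (d : ℕ) (g : LaurentPoly d) : RatF d :=
  ∑ w ∈ g.support, algebraMap (MvPolynomial (Fin d) ℂ) (RatF d) (MvPolynomial.C (g w)) * ratMon d w

/-- `σ_S(x) = Σ_{m ∈ S ∩ ℤ^d} x^m`, as a rational function (for `S` with finitely many
integer points). -/
def sigmaSet (d : ℕ) (S : Set (Fin d → ℝ)) : RatF d :=
  ∑ᶠ m ∈ {m : Fin d → ℤ | toR d m ∈ S}, ratMon d m

/-- `φ : PL → ℂ(x₁,…,x_d)` is the `ℂ[x₁^{±1},…,x_d^{±1}]`-module homomorphism sending the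
series `S_K` of a simple rational cone `K` to `σ_{P_K}(x) / Π (1 - x^{wᵢ})`. -/
def IsPhi (d : ℕ) (φ : ((Fin d → ℤ) → ℂ) → RatF d) : Prop :=
  (∀ S T, MemPL d S → MemPL d T → φ (S + T) = φ S + φ T) ∧
  (∀ (g : LaurentPoly d) (S), MemPL d S → φ (actLP d g S) = toRat d g * φ S) ∧
  (∀ (v : Fin d → ℝ) (w : Fin d → Fin d → ℤ),
      LinearIndependent ℝ (fun i => toR d (w i)) →
      φ (genSeries d (coneSet d d v w)) =
        sigmaSet d (parSet d v w) / ∏ i, (1 - ratMon d (w i)))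

/-- A convex polyhedron: an intersection of finitely many closed halfspaces. -/
def IsPolyhedron (d : ℕ) (P : Set (Fin d → ℝ)) : Prop :=
  ∃ (n : ℕ) (a : Fin n → Fin d → ℝ) (b : Fin n → ℝ),
    P = {y | ∀ i, dotR d (a i) y ≤ b i}

/-- The polar `P^∨ = {x : ⟨x,y⟩ ≤ 1 for all y ∈ P}`. -/
def polar (d : ℕ) (P : Set (Fin d → ℝ)) : Set (Fin d → ℝ) :=
  {x | ∀ y ∈ P, dotR d x y ≤ 1}


/-- The half-open cone `K_{ξ,v} = v + Σ_{w·ξ>0} ℝ_{≥0} w + Σ_{w·ξ<0} ℝ_{<0} w`. -/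
def lvCone (d : ℕ) (v : Fin d → ℝ) (w : Fin d → Fin d → ℤ) (xi : Fin d → ℝ) :
    Set (Fin d → ℝ) :=
  {y | ∃ lam : Fin d → ℝ,
    (∀ i, (0 < dotR d xi (toR d (w i)) → 0 ≤ lam i) ∧
          (dotR d xi (toR d (w i)) < 0 → lam i < 0)) ∧
    y = v + ∑ i, lam i • toR d (w i)}

/-- The cone `v + ℝ w_j + Σ_{i≠j, ξ·wᵢ>0} ℝ_{≥0} wᵢ + Σ_{i≠j, ξ·wᵢ<0} ℝ_{<0} wᵢ`
(the coefficient of `w j` is unconstrained). -/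
def lvConeLine (d : ℕ) (v : Fin d → ℝ) (w : Fin d → Fin d → ℤ) (xi : Fin d → ℝ)
    (j : Fin d) : Set (Fin d → ℝ) :=
  {y | ∃ lam : Fin d → ℝ,
    (∀ i, i ≠ j → (0 < dotR d xi (toR d (w i)) → 0 ≤ lam i) ∧
                  (dotR d xi (toR d (w i)) < 0 → lam i < 0)) ∧
    y = v + ∑ i, lam i • toR d (w i)}

section Aux
open Matrix Finset
variable {d : ℕ}

lemma toR_sub (m w : Fin d → ℤ) : toR d (m - w) = toR d m - toR d w := by
  funext i; simp [toR]

lemma toR_neg (m : Fin d → ℤ) : toR d (-m) = - toR d m := by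
  funext i; simp [toR]

lemma toR_eq_zero {m : Fin d → ℤ} (h : toR d m = 0) : m = 0 := by
  funext i
  have := congrFun h i
  simpa [toR] using this

lemma dotR_zero (x : Fin d → ℝ) : dotR d x 0 = 0 := by
  simp [dotR]

/-- uniqueness of coefficients -/
lemma rep_unique {w : Fin d → Fin d → ℤ}
    (hw : LinearIndependent ℝ (fun i => toR d (w i))) {lam mu : Fin d → ℝ}
    (h : ∑ i, lam i • toR d (w i) = ∑ i, mu i • toR d (w i)) : lam = mu := by
  have h2 : ∑ i, (lam i - mu i) • toR d (w i) = 0 := by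
    simp [sub_smul, Finset.sum_sub_distrib, h]
  have := (Fintype.linearIndependent_iff.mp hw) (fun i => lam i - mu i) h2
  funext i
  have h3 := this i
  linarith

lemma exists_least_pos (θ e : ℝ) (he : 0 < e) :
    ∃ δ : ℝ, 0 < δ ∧ ∀ k : ℤ, (0 < θ + e * k ↔ δ ≤ θ + e * k) := by
  refine ⟨θ + e * (⌊-θ / e⌋ + 1), ?_, ?_⟩
  · have h1 : (-θ) / e < (⌊-θ / e⌋ : ℝ) + 1 := Int.lt_floor_add_one _
    have h2 : e * ((-θ) / e) = -θ := by rw [mul_comm, div_mul_cancel₀ _ (ne_of_gt he)]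
    nlinarith
  · intro k
    constructor
    · intro h
      have hk : (-θ) / e < (k : ℝ) := by
        rw [div_lt_iff₀ he]; nlinarith
      have hk2 : ⌊-θ / e⌋ < k := Int.floor_lt.mpr hk
      have hk3 : (⌊-θ / e⌋ : ℝ) + 1 ≤ (k : ℝ) := by exact_mod_cast hk2
      nlinarith
    · intro h
      have h1 : (-θ) / e < (⌊-θ / e⌋ : ℝ) + 1 := Int.lt_floor_add_one _
      have h2 : e * ((-θ) / e) = -θ := by rw [mul_comm, div_mul_cancel₀ _ (ne_of_gt he)]
      nlinarith

end Aux

section Coset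
open Matrix
variable {d : ℕ}

/-- Key: coefficients of integer points lie in a fixed coset of a discrete subgroup. -/
lemma coeff_coset (v : Fin d → ℝ) (w : Fin d → Fin d → ℤ)
    (hw : LinearIndependent ℝ (fun i => toR d (w i))) :
    ∃ (D : ℝ) (c : Fin d → ℝ), D ≠ 0 ∧
      ∀ (lam : Fin d → ℝ) (m : Fin d → ℤ),
        toR d m = v + ∑ i, lam i • toR d (w i) →
        ∀ i, ∃ k : ℤ, -lam i = c i / D + (1/|D|) * k := by
  classical
  set Mint : Matrix (Fin d) (Fin d) ℤ := Matrix.of fun i k => w k i with hMint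
  set M : Matrix (Fin d) (Fin d) ℝ := Mint.map (Int.cast : ℤ → ℝ) with hMdef
  have hrows : (fun k => Mᵀ k) = fun k => toR d (w k) := by
    funext k; funext i; simp [hMdef, hMint, Matrix.transpose_apply, toR]
  have hunit : IsUnit Mᵀ := by
    rw [← Matrix.linearIndependent_rows_iff_isUnit]
    rw [show Mᵀ.row = fun k => toR d (w k) from hrows]
    exact hw
  have hD : M.det ≠ 0 := by
    have := (Matrix.isUnit_iff_isUnit_det _).mp ((Matrix.isUnit_transpose M).mp hunit)
    exact IsUnit.ne_zero this
  have hadj : M.adjugate = (Mint.adjugate).map (Int.cast : ℤ → ℝ) := by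
    have := (Int.castRingHom ℝ).map_adjugate Mint
    simp only [RingHom.mapMatrix_apply, Int.coe_castRingHom] at this
    rw [hMdef, ← this]
  refine ⟨M.det, M.adjugate *ᵥ v, hD, ?_⟩
  intro lam m heq i
  have hMv : M *ᵥ lam = toR d m - v := by
    funext i
    have h1 : (M *ᵥ lam) i = ∑ k, (w k i : ℝ) * lam k := by
      simp [Matrix.mulVec, dotProduct, hMdef, hMint]
    have h2 : toR d m i = v i + ∑ k, lam k * (w k i : ℝ) := by
      rw [heq]; simp [toR, Finset.sum_apply]
    simp only [Pi.sub_apply, h1, h2]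
    rw [Finset.sum_congr rfl (fun k _ => mul_comm ((w k i : ℝ)) (lam k))]
    ring
  have h2 : M.det • lam = M.adjugate *ᵥ (toR d m) - M.adjugate *ᵥ v := by
    rw [← Matrix.mulVec_sub, ← hMv, Matrix.mulVec_mulVec, Matrix.adjugate_mul,
      Matrix.smul_mulVec, Matrix.one_mulVec]
  obtain ⟨k, hk⟩ : ∃ k : ℤ, (M.adjugate *ᵥ toR d m) i = (k : ℝ) := by
    refine ⟨(Mint.adjugate *ᵥ m) i, ?_⟩
    simp only [hadj, Matrix.mulVec, dotProduct, Matrix.map_apply, toR]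
    push_cast
    rfl
  have h3 : M.det * lam i = (k : ℝ) - (M.adjugate *ᵥ v) i := by
    have := congrFun h2 i
    simpa [hk] using this
  have h4 : lam i = ((k : ℝ) - (M.adjugate *ᵥ v) i) / M.det := by
    rw [eq_div_iff hD]; linear_combination h3
  rcases lt_or_gt_of_ne hD with hneg | hpos
  · refine ⟨k, ?_⟩
    rw [h4, abs_of_neg hneg]
    rw [one_div_mul_eq_div, div_add_div _ _ hD (neg_ne_zero.mpr hD)]
    rw [← neg_div, div_eq_div_iff hD (mul_ne_zero hD (neg_ne_zero.mpr hD))]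
    ring
  · refine ⟨-k, ?_⟩
    rw [h4, abs_of_pos hpos]
    push_cast
    rw [one_div_mul_eq_div, div_add_div _ _ hD hD]
    rw [← neg_div, div_eq_div_iff hD (mul_ne_zero hD hD)]
    ring

end Coset

section LemA
variable {d : ℕ}

lemma sum_signed (w : Fin d → Fin d → ℤ) (P : Fin d → Prop) [DecidablePred P] (a : Fin d → ℝ) :
    ∑ i, a i • toR d (if P i then w i else -(w i)) =
      ∑ i, (if P i then a i else -(a i)) • toR d (w i) := by
  refine Finset.sum_congr rfl fun i _ => ?_
  by_cases h : P i <;> simp [h, toR_neg]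

/-- The integer points of the half-open cone `lvCone` are those of a shifted closed cone. -/
lemma lvCone_eq_cone (v : Fin d → ℝ) (w : Fin d → Fin d → ℤ)
    (hw : LinearIndependent ℝ (fun i => toR d (w i))) (xi : Fin d → ℝ)
    (hxi : ∀ i, dotR d xi (toR d (w i)) ≠ 0) :
    ∃ v' : Fin d → ℝ, ∀ m : Fin d → ℤ,
      (toR d m ∈ lvCone d v w xi ↔
        toR d m ∈ coneSet d d v'
          (fun i => if 0 < dotR d xi (toR d (w i)) then w i else -(w i))) := by
  classical
  obtain ⟨D, c, hD, hkey⟩ := coeff_coset v w hw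
  have epos : (0:ℝ) < 1/|D| := by positivity
  choose δ hδpos hδiff using fun i => exists_least_pos (c i / D) (1/|D|) epos
  set P : Fin d → Prop := fun i => 0 < dotR d xi (toR d (w i)) with hP
  set δ' : Fin d → ℝ := fun i => if P i then 0 else δ i with hδ'
  refine ⟨v + ∑ i, δ' i • toR d (if P i then w i else -(w i)), fun m => ?_⟩
  constructor
  · rintro ⟨lam, hcon, heq⟩
    refine ⟨fun i => (if P i then lam i else -(lam i)) - δ' i, fun i => ?_, ?_⟩
    · by_cases hPi : P i
      · have h0 := (hcon i).1 hPi
        simp only [hδ', if_pos hPi]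
        linarith
      · have hlt : dotR d xi (toR d (w i)) < 0 := lt_of_le_of_ne (le_of_not_gt hPi) (hxi i)
        have hlam : lam i < 0 := (hcon i).2 hlt
        obtain ⟨k, hk⟩ := hkey lam m heq i
        have hge : δ i ≤ -(lam i) := by
          have h1 := (hδiff i k).mp (by rw [← hk]; linarith)
          rw [← hk] at h1; exact h1
        simp only [hδ', if_neg hPi]
        linarith
    · have h1 : ∑ i, ((if P i then lam i else -(lam i)) - δ' i) •
            toR d (if P i then w i else -(w i))
          = ∑ i, (if P i then lam i else -(lam i)) • toR d (if P i then w i else -(w i))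
            - ∑ i, δ' i • toR d (if P i then w i else -(w i)) := by
        simp [sub_smul, Finset.sum_sub_distrib]
      have h2 : ∑ i, (if P i then lam i else -(lam i)) • toR d (if P i then w i else -(w i))
          = ∑ i, lam i • toR d (w i) := by
        rw [sum_signed w P]
        refine Finset.sum_congr rfl fun i _ => ?_
        by_cases h : P i <;> simp [h]
      rw [heq, h1, h2]
      abel
  · rintro ⟨mu, hmu, heq⟩
    refine ⟨fun i => if P i then mu i else -(mu i + δ i), fun i => ⟨?_, ?_⟩, ?_⟩
    · intro hpos
      have hPi : P i := hpos
      simp only [if_pos hPi]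
      exact hmu i
    · intro hneg
      have hPi : ¬ P i := fun h => absurd hneg (asymm h)
      simp only [if_neg hPi]
      have := hmu i
      have := hδpos i
      linarith
    · have h1 : ∑ i, δ' i • toR d (if P i then w i else -(w i))
          + ∑ i, mu i • toR d (if P i then w i else -(w i))
          = ∑ i, (δ' i + mu i) • toR d (if P i then w i else -(w i)) := by
        simp [add_smul, Finset.sum_add_distrib]
      have h2 : ∑ i, (δ' i + mu i) • toR d (if P i then w i else -(w i))
          = ∑ i, (if P i then mu i else -(mu i + δ i)) • toR d (w i) := by
        rw [sum_signed w P]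
        refine Finset.sum_congr rfl fun i _ => ?_
        by_cases h : P i <;> simp [h, hδ'] <;> ring_nf
      have hconv : ∑ i, mu i • toR d
            ((fun i => if 0 < dotR d xi (toR d (w i)) then w i else -(w i)) i)
          = ∑ i, mu i • toR d (if P i then w i else -(w i)) :=
        Finset.sum_congr rfl (fun i _ => by
          by_cases h : 0 < dotR d xi (toR d (w i)) <;> simp [h, hP])
      rw [hconv] at heq
      rw [heq, add_assoc, h1, h2]
end LemA

section Parts
variable {d : ℕ} (v : Fin d → ℝ) (w : Fin d → Fin d → ℤ)

lemma lv_disjoint (hw : LinearIndependent ℝ (fun i => toR d (w i))) (xi xi' : Fin d → ℝ)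
    (j : Fin d)
    (hxi : ∀ i, dotR d xi (toR d (w i)) ≠ 0)
    (hxi' : ∀ i, dotR d xi' (toR d (w i)) ≠ 0)
    (hflip : 0 < dotR d xi (toR d (w j)) ↔ dotR d xi' (toR d (w j)) < 0) :
    Disjoint (lvCone d v w xi) (lvCone d v w xi') := by
  rw [Set.disjoint_left]
  rintro y ⟨lam, hc, he⟩ ⟨lam', hc', he'⟩
  have hll : lam = lam' := by
    apply rep_unique hw
    have := he.symm.trans he'
    exact add_left_cancel this
  by_cases hj : 0 < dotR d xi (toR d (w j))
  · have h1 := (hc j).1 hj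
    have h2 := (hc' j).2 (hflip.mp hj)
    rw [hll] at h1; linarith
  · have hlt : dotR d xi (toR d (w j)) < 0 := lt_of_le_of_ne (le_of_not_gt hj) (hxi j)
    have h1 := (hc j).2 hlt
    have h2' : 0 < dotR d xi' (toR d (w j)) := by
      rcases lt_or_gt_of_ne (hxi' j) with h | h
      · exact absurd (hflip.mpr h) hj
      · exact h
    have h2 := (hc' j).1 h2'
    rw [hll] at h1; linarith

lemma lv_union (xi xi' : Fin d → ℝ) (j : Fin d)
    (hxi : ∀ i, dotR d xi (toR d (w i)) ≠ 0)
    (hxi' : ∀ i, dotR d xi' (toR d (w i)) ≠ 0)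
    (hsame : ∀ i, i ≠ j →
      (0 < dotR d xi (toR d (w i)) ↔ 0 < dotR d xi' (toR d (w i))))
    (hflip : 0 < dotR d xi (toR d (w j)) ↔ dotR d xi' (toR d (w j)) < 0) :
    lvCone d v w xi ∪ lvCone d v w xi' = lvConeLine d v w xi j := by
  have transfer : ∀ (lam : Fin d → ℝ) i, i ≠ j →
      ((0 < dotR d xi' (toR d (w i)) → 0 ≤ lam i) ∧
       (dotR d xi' (toR d (w i)) < 0 → lam i < 0)) →
      ((0 < dotR d xi (toR d (w i)) → 0 ≤ lam i) ∧
       (dotR d xi (toR d (w i)) < 0 → lam i < 0)) := by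
    intro lam i hij h
    constructor
    · intro hp; exact h.1 ((hsame i hij).mp hp)
    · intro hn
      refine h.2 ?_
      rcases lt_or_gt_of_ne (hxi' i) with h' | h'
      · exact h'
      · exact absurd ((hsame i hij).mpr h') (asymm hn)
  ext y
  constructor
  · rintro (⟨lam, hc, he⟩ | ⟨lam, hc, he⟩)
    · exact ⟨lam, fun i _ => hc i, he⟩
    · exact ⟨lam, fun i hij => transfer lam i hij (hc i), he⟩
  · rintro ⟨lam, hc, he⟩
    by_cases hj : 0 < dotR d xi (toR d (w j))
    · by_cases hl : 0 ≤ lam j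
      · left
        refine ⟨lam, fun i => ?_, he⟩
        by_cases hij : i = j
        · subst hij
          exact ⟨fun _ => hl, fun h => absurd h (asymm hj)⟩
        · exact hc i hij
      · right
        refine ⟨lam, fun i => ?_, he⟩
        by_cases hij : i = j
        · subst hij
          exact ⟨fun h => absurd (hflip.mp hj) (asymm h), fun _ => by linarith⟩
        · constructor
          · intro hp; exact (hc i hij).1 ((hsame i hij).mpr hp)
          · intro hn
            refine (hc i hij).2 ?_
            rcases lt_or_gt_of_ne (hxi i) with h' | h'
            · exact h'
            · exact absurd ((hsame i hij).mp h') (asymm hn)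
    · have hjlt : dotR d xi (toR d (w j)) < 0 := lt_of_le_of_ne (le_of_not_gt hj) (hxi j)
      have hj' : 0 < dotR d xi' (toR d (w j)) := by
        rcases lt_or_gt_of_ne (hxi' j) with h | h
        · exact absurd (hflip.mpr h) hj
        · exact h
      by_cases hl : lam j < 0
      · left
        refine ⟨lam, fun i => ?_, he⟩
        by_cases hij : i = j
        · subst hij
          exact ⟨fun h => absurd h hj, fun _ => hl⟩
        · exact hc i hij
      · right
        refine ⟨lam, fun i => ?_, he⟩
        by_cases hij : i = j
        · subst hij
          exact ⟨fun _ => le_of_not_gt hl, fun h => absurd h (asymm hj')⟩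
        · constructor
          · intro hp; exact (hc i hij).1 ((hsame i hij).mpr hp)
          · intro hn
            refine (hc i hij).2 ?_
            rcases lt_or_gt_of_ne (hxi i) with h' | h'
            · exact h'
            · exact absurd ((hsame i hij).mp h') (asymm hn)

lemma lv_image (xi : Fin d → ℝ) (j : Fin d) :
    (fun y => toR d (w j) + y) '' lvConeLine d v w xi j = lvConeLine d v w xi j := by
  classical
  ext y
  constructor
  · rintro ⟨x, ⟨lam, hc, he⟩, rfl⟩
    refine ⟨fun i => lam i + if i = j then 1 else 0, fun i hij => ?_, ?_⟩
    · simpa [if_neg hij] using hc i hij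
    · rw [he]
      have : ∑ i, (lam i + if i = j then 1 else 0) • toR d (w i)
          = ∑ i, lam i • toR d (w i) + ∑ i, (if i = j then (1:ℝ) else 0) • toR d (w i) := by
        simp [add_smul, Finset.sum_add_distrib]
      rw [this]
      have h2 : ∑ i, (if i = j then (1:ℝ) else 0) • toR d (w i) = toR d (w j) := by
        rw [Finset.sum_eq_single j]
        · simp
        · intro b _ hb; simp [if_neg hb]
        · intro hj; exact absurd (Finset.mem_univ j) hj
      rw [h2]
      abel
  · rintro ⟨lam, hc, he⟩
    refine ⟨y - toR d (w j), ⟨fun i => lam i - if i = j then 1 else 0, fun i hij => ?_, ?_⟩, ?_⟩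
    · simpa [if_neg hij] using hc i hij
    · rw [he]
      have : ∑ i, (lam i - if i = j then 1 else 0) • toR d (w i)
          = ∑ i, lam i • toR d (w i) - ∑ i, (if i = j then (1:ℝ) else 0) • toR d (w i) := by
        simp [sub_smul, Finset.sum_sub_distrib]
      rw [this]
      have h2 : ∑ i, (if i = j then (1:ℝ) else 0) • toR d (w i) = toR d (w j) := by
        rw [Finset.sum_eq_single j]
        · simp
        · intro b _ hb; simp [if_neg hb]
        · intro hj; exact absurd (Finset.mem_univ j) hj
      rw [h2]
      abel
    · simp

end Parts

section Alg
variable {d : ℕ}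

lemma actLP_single (a : Fin d → ℤ) (S : (Fin d → ℤ) → ℂ) :
    actLP d (Finsupp.single a (1:ℂ)) S = fun m => S (m - a) := by
  funext m
  unfold actLP
  rw [Finsupp.support_single_ne_zero _ one_ne_zero, Finset.sum_singleton,
    Finsupp.single_eq_same, one_mul]

lemma memPL_simple {K0 : Set (Fin d → ℝ)} (h : IsSimpleCone d K0) :
    MemPL d (genSeries d K0) := by
  refine ⟨1, fun _ => Finsupp.single 0 1, fun _ => K0, fun _ => h, ?_⟩
  rw [Fin.sum_univ_one, actLP_single]
  funext m; simp

lemma MemPL.add' {S T : (Fin d → ℤ) → ℂ} (hS : MemPL d S) (hT : MemPL d T) :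
    MemPL d (S + T) := by
  obtain ⟨n, g, K, hK, rfl⟩ := hS
  obtain ⟨n', g', K', hK', rfl⟩ := hT
  refine ⟨n + n', Fin.append g g', Fin.append K K', ?_, ?_⟩
  · intro i
    refine Fin.addCases (fun i => ?_) (fun i => ?_) i
    · rw [Fin.append_left]; exact hK i
    · rw [Fin.append_right]; exact hK' i
  · rw [Fin.sum_univ_add]
    congr 1
    · exact Finset.sum_congr rfl fun i _ => by rw [Fin.append_left, Fin.append_left]
    · exact Finset.sum_congr rfl fun i _ => by rw [Fin.append_right, Fin.append_right]

lemma li_signed (w : Fin d → Fin d → ℤ)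
    (hw : LinearIndependent ℝ (fun i => toR d (w i))) (P : Fin d → Prop) [DecidablePred P] :
    LinearIndependent ℝ (fun i => toR d (if P i then w i else -(w i))) := by
  have h := hw.units_smul (fun i => if P i then (1:ℝˣ) else -1)
  have he : ((fun i => if P i then (1:ℝˣ) else -1) • fun i => toR d (w i))
      = fun i => toR d (if P i then w i else -(w i)) := by
    funext i
    by_cases hp : P i <;> simp [hp, toR_neg, Pi.smul_apply', Units.smul_def]
  rwa [he] at h

lemma algebraMap_X_ne_zero (i : Fin d) :
    (algebraMap (MvPolynomial (Fin d) ℂ) (RatF d)) (MvPolynomial.X i) ≠ 0 := by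
  intro h0
  have h1 : (algebraMap (MvPolynomial (Fin d) ℂ) (RatF d)) (MvPolynomial.X i)
      = (algebraMap (MvPolynomial (Fin d) ℂ) (RatF d)) 0 := by rw [h0, map_zero]
  have hX : (MvPolynomial.X i : MvPolynomial (Fin d) ℂ) ≠ 0 := MvPolynomial.X_ne_zero i
  exact hX (IsFractionRing.injective (MvPolynomial (Fin d) ℂ) (RatF d) h1)

lemma ratMon_natCast (n : Fin d → ℕ) :
    ratMon d (fun i => (n i : ℤ)) =
      algebraMap (MvPolynomial (Fin d) ℂ) (RatF d)
        (MvPolynomial.monomial (Finsupp.equivFunOnFinite.symm n) 1) := by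
  unfold ratMon
  have h1 : ∀ i, (algebraMap (MvPolynomial (Fin d) ℂ) (RatF d) (MvPolynomial.X i)) ^ ((n i : ℤ))
      = algebraMap (MvPolynomial (Fin d) ℂ) (RatF d)
          (MvPolynomial.X i ^ (Finsupp.equivFunOnFinite.symm n) i) := by
    intro i
    rw [zpow_natCast, map_pow]
    simp [Finsupp.equivFunOnFinite]
  rw [Finset.prod_congr rfl (fun i _ => h1 i), ← MvPolynomial.prod_X_pow_eq_monomial, map_prod]
  exact (Finset.prod_subset (Finset.subset_univ _) (fun x _ hx => by
    simp only [Finsupp.notMem_support_iff] at hx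
    rw [hx, pow_zero, map_one])).symm

lemma ratMon_eq_one {a : Fin d → ℤ} (h : ratMon d a = 1) : a = 0 := by
  set p : Fin d → ℕ := fun i => (a i).toNat with hp
  set q : Fin d → ℕ := fun i => (-(a i)).toNat with hq
  have hpq : ∀ i, (p i : ℤ) = (q i : ℤ) + a i := by
    intro i
    simp only [hp, hq]
    rcases le_or_gt 0 (a i) with h' | h'
    · rw [Int.toNat_of_nonneg h', Int.toNat_of_nonpos (by linarith)]; ring
    · rw [Int.toNat_of_nonpos (le_of_lt h'), Int.toNat_of_nonneg (by linarith)]; ring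
  have hmul : ratMon d (fun i => (p i : ℤ)) = ratMon d (fun i => (q i : ℤ)) * ratMon d a := by
    unfold ratMon
    rw [← Finset.prod_mul_distrib]
    refine Finset.prod_congr rfl fun i _ => ?_
    rw [← zpow_add₀ (algebraMap_X_ne_zero i), ← hpq i]
  rw [h, mul_one] at hmul
  rw [ratMon_natCast, ratMon_natCast] at hmul
  have hinj := IsFractionRing.injective (MvPolynomial (Fin d) ℂ) (RatF d)
  have hmono := hinj hmul
  rcases (MvPolynomial.monomial_eq_monomial_iff _ _ _ _).mp hmono with ⟨heq, -⟩ | ⟨h1, -⟩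
  · have h2 : p = q := Finsupp.equivFunOnFinite.symm.injective heq
    funext i
    have h3 := hpq i
    have h4 : p i = q i := congrFun h2 i
    simp only [Pi.zero_apply]
    omega
  · exact absurd h1 one_ne_zero

lemma toRat_single (a : Fin d → ℤ) :
    toRat d (Finsupp.single a (1:ℂ)) = ratMon d a := by
  unfold toRat
  rw [Finsupp.support_single_ne_zero _ one_ne_zero, Finset.sum_singleton,
    Finsupp.single_eq_same, MvPolynomial.C_1, map_one, one_mul]

end Alg


/-- If `ξ, ξ'` induce the same signs on all `wᵢ` except for the single
index `j`, then the half-open cones `K_{ξ,v}` and `K_{ξ',v}` are disjoint with union the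
cone `K` with apex line `v + ℝ w_j`, which satisfies `w_j + K = K`; consequently
`S_{K_{ξ,v}} + S_{K_{ξ',v}} = S_K` and `φ(S_{K_{ξ,v}}) = -φ(S_{K_{ξ',v}})`. -/
theorem statement11 (d : ℕ) (v : Fin d → ℝ) (w : Fin d → Fin d → ℤ)
    (hw : LinearIndependent ℝ (fun i => toR d (w i)))
    (xi xi' : Fin d → ℝ) (j : Fin d)
    (hxi : ∀ i, dotR d xi (toR d (w i)) ≠ 0)
    (hxi' : ∀ i, dotR d xi' (toR d (w i)) ≠ 0)
    (hsame : ∀ i, i ≠ j →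
      (0 < dotR d xi (toR d (w i)) ↔ 0 < dotR d xi' (toR d (w i))))
    (hflip : 0 < dotR d xi (toR d (w j)) ↔ dotR d xi' (toR d (w j)) < 0) :
    Disjoint (lvCone d v w xi) (lvCone d v w xi') ∧
    lvCone d v w xi ∪ lvCone d v w xi' = lvConeLine d v w xi j ∧
    (fun y => toR d (w j) + y) '' lvConeLine d v w xi j = lvConeLine d v w xi j ∧
    genSeries d (lvCone d v w xi) + genSeries d (lvCone d v w xi') =
      genSeries d (lvConeLine d v w xi j) ∧
    (∀ φ : ((Fin d → ℤ) → ℂ) → RatF d, IsPhi d φ →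
      φ (genSeries d (lvCone d v w xi)) = - φ (genSeries d (lvCone d v w xi'))) := by
  have hdis := lv_disjoint v w hw xi xi' j hxi hxi' hflip
  have huni := lv_union v w xi xi' j hxi hxi' hsame hflip
  have himg := lv_image v w xi j
  have hsum : genSeries d (lvCone d v w xi) + genSeries d (lvCone d v w xi')
      = genSeries d (lvConeLine d v w xi j) := by
    funext m
    simp only [Pi.add_apply, genSeries]
    have hmem : toR d m ∈ lvConeLine d v w xi j ↔
        toR d m ∈ lvCone d v w xi ∨ toR d m ∈ lvCone d v w xi' := by
      rw [← huni]; exact Iff.rfl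
    by_cases h1 : toR d m ∈ lvCone d v w xi <;> by_cases h2 : toR d m ∈ lvCone d v w xi'
    · exact absurd h2 (Set.disjoint_left.mp hdis h1)
    · simp [h1, h2, hmem.mpr (Or.inl h1)]
    · simp [h1, h2, hmem.mpr (Or.inr h2)]
    · have h3 : ¬ toR d m ∈ lvConeLine d v w xi j := fun h => by
        rcases hmem.mp h with h | h
        · exact h1 h
        · exact h2 h
      simp [h1, h2, h3]
  refine ⟨hdis, huni, himg, hsum, ?_⟩
  intro φ hφ
  obtain ⟨hadd, hact, hcone⟩ := hφ
  obtain ⟨vA, hA⟩ := lvCone_eq_cone v w hw xi hxi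
  obtain ⟨vB, hB⟩ := lvCone_eq_cone v w hw xi' hxi'
  have hgA : genSeries d (lvCone d v w xi) = genSeries d (coneSet d d vA
      (fun i => if 0 < dotR d xi (toR d (w i)) then w i else -(w i))) := by
    funext m; exact if_congr (hA m) rfl rfl
  have hgB : genSeries d (lvCone d v w xi') = genSeries d (coneSet d d vB
      (fun i => if 0 < dotR d xi' (toR d (w i)) then w i else -(w i))) := by
    funext m; exact if_congr (hB m) rfl rfl
  have memA : MemPL d (genSeries d (lvCone d v w xi)) := by
    rw [hgA]
    exact memPL_simple ⟨vA, _, li_signed w hw _, rfl⟩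
  have memB : MemPL d (genSeries d (lvCone d v w xi')) := by
    rw [hgB]
    exact memPL_simple ⟨vB, _, li_signed w hw _, rfl⟩
  have memK : MemPL d (genSeries d (lvConeLine d v w xi j)) := by
    rw [← hsum]; exact memA.add' memB
  have hshift : actLP d (Finsupp.single (w j) (1:ℂ)) (genSeries d (lvConeLine d v w xi j))
      = genSeries d (lvConeLine d v w xi j) := by
    funext m
    rw [actLP_single]
    refine if_congr ?_ rfl rfl
    rw [toR_sub]
    constructor
    · intro h
      have h4 := Set.mem_image_of_mem (fun y => toR d (w j) + y) h
      rw [himg] at h4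
      simpa using h4
    · intro h
      have h4 : toR d m ∈ (fun y => toR d (w j) + y) '' lvConeLine d v w xi j := by
        rw [himg]; exact h
      obtain ⟨x, hx, hxe⟩ := h4
      have h5 : x = toR d m - toR d (w j) :=
        eq_sub_of_add_eq (by simpa [add_comm] using hxe)
      rwa [h5] at hx
  have hφK : φ (genSeries d (lvConeLine d v w xi j))
      = ratMon d (w j) * φ (genSeries d (lvConeLine d v w xi j)) := by
    conv_lhs => rw [← hshift]
    rw [hact _ _ memK, toRat_single]
  have hwj : w j ≠ 0 := by
    intro h0
    apply hxi j
    rw [h0]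
    have h1 : toR d (0 : Fin d → ℤ) = 0 := by funext i; simp [toR]
    rw [h1, dotR_zero]
  have hne : ratMon d (w j) ≠ 1 := fun h => hwj (ratMon_eq_one h)
  have hK0 : φ (genSeries d (lvConeLine d v w xi j)) = 0 := by
    have h1 : (1 - ratMon d (w j)) * φ (genSeries d (lvConeLine d v w xi j)) = 0 := by
      rw [sub_mul, one_mul, ← hφK, sub_self]
    rcases mul_eq_zero.mp h1 with h | h
    · exact absurd (by linear_combination -h : ratMon d (w j) = 1) hne
    · exact h
  have h6 := hadd _ _ memA memB
  rw [hsum, hK0] at h6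
  have h7 : φ (genSeries d (lvCone d v w xi)) + φ (genSeries d (lvCone d v w xi')) = 0 :=
    h6.symm
  linear_combination h7

end
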